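/- arXiv:1704.04359 — 8 statements merged into one kernel-verified Lean document; each statement's English description precedes it below -/
import Mathlib

section
/- Let A ⊂ ℂ be finite, C = max_{a∈A}|a|, ε = min(min_{a≠b∈A}|a−b|, min_{0≠a∈A}|a|), and let β ≥ 2C/ε + 1 be a real number. If c₁,…,c_t ∈ A, a₁,…,a_s ∈ A with strictly increasing natural-number exponents d₁ < ⋯ < d_t and k₁ < ⋯ < k_s satisfy Σᵢ cᵢ β^{dᵢ} = Σⱼ aⱼ β^{kⱼ}, and c_t ≠ 0, a_s ≠ 0, then d_t = k_s and c_t = a_s. -/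
open Finset

lemma aux_bound (β Cb : ℝ) (hβ : 1 < β) (hCb : 0 ≤ Cb) (n D : ℕ)
    (c : Fin n → ℂ) (d : Fin n → ℕ) (hinj : Function.Injective d)
    (hD : ∀ i, d i < D) (hc : ∀ i, ‖c i‖ ≤ Cb) :
    ‖∑ i, c i * (β : ℂ) ^ d i‖ ≤ Cb * ((β ^ D - 1) / (β - 1)) := by
  have hβ0 : (0:ℝ) ≤ β := le_trans zero_le_one hβ.le
  calc ‖∑ i, c i * (β : ℂ) ^ d i‖
      ≤ ∑ i, ‖c i * (β : ℂ) ^ d i‖ := norm_sum_le _ _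
    _ = ∑ i, ‖c i‖ * β ^ d i := by
        refine Finset.sum_congr rfl fun i _ => ?_
        rw [norm_mul, norm_pow, Complex.norm_real, Real.norm_eq_abs,
          abs_of_nonneg hβ0]
    _ ≤ ∑ i, Cb * β ^ d i := by
        refine Finset.sum_le_sum fun i _ => ?_
        exact mul_le_mul_of_nonneg_right (hc i) (pow_nonneg hβ0 _)
    _ = Cb * ∑ i, β ^ d i := by rw [Finset.mul_sum]
    _ ≤ Cb * ∑ m ∈ range D, β ^ m := by
        refine mul_le_mul_of_nonneg_left ?_ hCb
        have h1 : ∑ i, β ^ d i = ∑ m ∈ Finset.univ.image d, β ^ m :=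
          (Finset.sum_image (fun x _ y _ h => hinj h)).symm
        rw [h1]
        refine Finset.sum_le_sum_of_subset_of_nonneg ?_ (fun m _ _ => pow_nonneg hβ0 _)
        intro m hm
        simp only [Finset.mem_image] at hm
        obtain ⟨i, _, rfl⟩ := hm
        exact Finset.mem_range.2 (hD i)
    _ = Cb * ((β ^ D - 1) / (β - 1)) := by rw [geom_sum_eq (ne_of_gt hβ)]

lemma aux_le (β Cb ε : ℝ) (hε : 0 < ε) (hβ1 : 1 < β) (hβ : 2 * Cb ≤ ε * (β - 1))
    (hCb : 0 ≤ Cb)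
    (t s : ℕ) (c : Fin (t+1) → ℂ) (a : Fin (s+1) → ℂ)
    (d : Fin (t+1) → ℕ) (k : Fin (s+1) → ℕ)
    (hd : StrictMono d) (hk : StrictMono k)
    (hcC : ∀ i, ‖c i‖ ≤ Cb) (haC : ∀ j, ‖a j‖ ≤ Cb)
    (hct : ε ≤ ‖c (Fin.last t)‖)
    (hsum : ∑ i, c i * (β : ℂ) ^ d i = ∑ j, a j * (β : ℂ) ^ k j) :
    d (Fin.last t) ≤ k (Fin.last s) := by
  by_contra h
  push_neg at h
  set D := d (Fin.last t) with hD
  have hβ0 : (0:ℝ) ≤ β := le_trans zero_le_one hβ1.le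
  have heq : c (Fin.last t) * (β:ℂ)^D =
      (∑ j, a j * (β : ℂ) ^ k j) - ∑ i : Fin t, c i.castSucc * (β:ℂ) ^ d i.castSucc := by
    rw [← hsum, Fin.sum_univ_castSucc]; ring
  have hX : (0:ℝ) ≤ (β ^ D - 1) / (β - 1) := by
    apply div_nonneg
    · have : (1:ℝ) ≤ β ^ D := one_le_pow₀ hβ1.le
      linarith
    · linarith
  have hb1 : ‖∑ j, a j * (β : ℂ) ^ k j‖ ≤ Cb * ((β ^ D - 1) / (β - 1)) := by
    refine aux_bound β Cb hβ1 hCb _ D a k hk.injective (fun j => ?_) haC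
    exact lt_of_le_of_lt (hk.monotone (Fin.le_last j)) h
  have hb2 : ‖∑ i : Fin t, c i.castSucc * (β:ℂ) ^ d i.castSucc‖
      ≤ Cb * ((β ^ D - 1) / (β - 1)) := by
    refine aux_bound β Cb hβ1 hCb _ D _ _ (fun x y hxy => ?_) (fun i => hd (Fin.castSucc_lt_last i))
      (fun i => hcC _)
    exact Fin.castSucc_injective t (hd.injective hxy)
  have hL : ε * β ^ D ≤ ‖c (Fin.last t) * (β:ℂ)^D‖ := by
    rw [norm_mul, norm_pow, Complex.norm_real, Real.norm_eq_abs, abs_of_nonneg hβ0]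
    exact mul_le_mul_of_nonneg_right hct (pow_nonneg hβ0 _)
  have hR : ‖c (Fin.last t) * (β:ℂ)^D‖ ≤ 2 * Cb * ((β ^ D - 1) / (β - 1)) := by
    rw [heq]
    calc ‖_‖ ≤ _ + _ := norm_sub_le _ _
      _ ≤ 2 * Cb * ((β ^ D - 1) / (β - 1)) := by linarith
  have h2 : 2 * Cb * ((β ^ D - 1) / (β - 1)) ≤ ε * (β ^ D - 1) := by
    have := mul_le_mul_of_nonneg_right hβ hX
    calc 2 * Cb * ((β ^ D - 1) / (β - 1)) ≤ ε * (β - 1) * ((β ^ D - 1) / (β - 1)) := this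
      _ = ε * (β ^ D - 1) := by
          have hne : β - 1 ≠ 0 := by linarith
          rw [mul_assoc, mul_comm (β - 1), div_mul_cancel₀ _ hne]
  have hpos : (0:ℝ) < β ^ D := pow_pos (lt_trans zero_lt_one hβ1) D
  nlinarith

theorem stmt_1 (A : Finset ℂ) (C ε₁ ε₂ ε : ℝ)
    (hC : IsGreatest ((fun a => ‖a‖) '' (A : Set ℂ)) C)
    (hε₁ : IsLeast {x : ℝ | ∃ a ∈ A, ∃ b ∈ A, a ≠ b ∧ x = ‖a - b‖} ε₁)
    (hε₂ : IsLeast {x : ℝ | ∃ a ∈ A, a ≠ 0 ∧ x = ‖a‖} ε₂)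
    (hε : ε = min ε₁ ε₂)
    (β : ℝ) (hβ : β ≥ 2 * C / ε + 1)
    (t s : ℕ) (c : Fin (t + 1) → ℂ) (a : Fin (s + 1) → ℂ)
    (d : Fin (t + 1) → ℕ) (k : Fin (s + 1) → ℕ)
    (hcA : ∀ i, c i ∈ A) (haA : ∀ j, a j ∈ A)
    (hd : StrictMono d) (hk : StrictMono k)
    (hsum : ∑ i, c i * (β : ℂ) ^ d i = ∑ j, a j * (β : ℂ) ^ k j)
    (hct : c (Fin.last t) ≠ 0) (has : a (Fin.last s) ≠ 0) :
    d (Fin.last t) = k (Fin.last s) ∧ c (Fin.last t) = a (Fin.last s) := by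
  -- basic positivity facts
  have hε₁pos : 0 < ε₁ := by
    obtain ⟨x, hx, y, hy, hxy, hval⟩ := hε₁.1
    rw [hval]
    exact norm_pos_iff.2 (sub_ne_zero.2 hxy)
  have hε₂pos : 0 < ε₂ := by
    obtain ⟨x, hx, hx0, hval⟩ := hε₂.1
    rw [hval]; exact norm_pos_iff.2 hx0
  have hεpos : 0 < ε := by rw [hε]; exact lt_min hε₁pos hε₂pos
  have hCub : ∀ z ∈ A, ‖z‖ ≤ C := fun z hz => hC.2 ⟨z, hz, rfl⟩
  have hεleC : ε ≤ C := by
    obtain ⟨x, hx, hx0, hval⟩ := hε₂.1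
    have := hCub x hx
    rw [hε]; calc min ε₁ ε₂ ≤ ε₂ := min_le_right _ _
      _ ≤ C := by rw [hval]; exact this
  have hCpos : 0 < C := lt_of_lt_of_le hεpos hεleC
  have hβ1 : 1 < β := by
    have : 0 < 2 * C / ε := div_pos (by linarith) hεpos
    linarith
  have hkey : 2 * C ≤ ε * (β - 1) := by
    have h1 : 2 * C / ε ≤ β - 1 := by linarith
    calc 2 * C = ε * (2 * C / ε) := by field_simp
      _ ≤ ε * (β - 1) := mul_le_mul_of_nonneg_left h1 hεpos.le
  have hεlow : ∀ z ∈ A, z ≠ 0 → ε ≤ ‖z‖ := by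
    intro z hz hz0
    have := hε₂.2 ⟨z, hz, hz0, rfl⟩
    rw [hε]; exact le_trans (min_le_right _ _) this
  have hcC : ∀ i, ‖c i‖ ≤ C := fun i => hCub _ (hcA i)
  have haC : ∀ j, ‖a j‖ ≤ C := fun j => hCub _ (haA j)
  have hle1 : d (Fin.last t) ≤ k (Fin.last s) :=
    aux_le β C ε hεpos hβ1 hkey hCpos.le t s c a d k hd hk hcC haC
      (hεlow _ (hcA _) hct) hsum
  have hle2 : k (Fin.last s) ≤ d (Fin.last t) :=
    aux_le β C ε hεpos hβ1 hkey hCpos.le s t a c k d hk hd haC hcC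
      (hεlow _ (haA _) has) hsum.symm
  have hDk : d (Fin.last t) = k (Fin.last s) := le_antisymm hle1 hle2
  refine ⟨hDk, ?_⟩
  by_contra hne
  set D := d (Fin.last t) with hDdef
  have hεab : ε ≤ ‖c (Fin.last t) - a (Fin.last s)‖ := by
    have := hε₁.2 ⟨c (Fin.last t), hcA _, a (Fin.last s), haA _, hne, rfl⟩
    rw [hε]; exact le_trans (min_le_left _ _) this
  have hβ0 : (0:ℝ) ≤ β := le_trans zero_le_one hβ1.le
  have heq : (c (Fin.last t) - a (Fin.last s)) * (β:ℂ)^D =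
      (∑ j : Fin s, a j.castSucc * (β : ℂ) ^ k j.castSucc)
        - ∑ i : Fin t, c i.castSucc * (β:ℂ) ^ d i.castSucc := by
    have h := hsum
    rw [Fin.sum_univ_castSucc, Fin.sum_univ_castSucc (f := fun j => a j * (β:ℂ) ^ k j),
      ← hDk] at h
    linear_combination h
  have hX : (0:ℝ) ≤ (β ^ D - 1) / (β - 1) := by
    apply div_nonneg
    · have : (1:ℝ) ≤ β ^ D := one_le_pow₀ hβ1.le
      linarith
    · linarith
  have hb1 : ‖∑ j : Fin s, a j.castSucc * (β : ℂ) ^ k j.castSucc‖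
      ≤ C * ((β ^ D - 1) / (β - 1)) := by
    refine aux_bound β C hβ1 hCpos.le _ D _ _ (fun x y hxy => ?_) (fun j => ?_) (fun j => haC _)
    · exact Fin.castSucc_injective s (hk.injective hxy)
    · exact (hk (Fin.castSucc_lt_last j)).trans_le hDk.ge
  have hb2 : ‖∑ i : Fin t, c i.castSucc * (β:ℂ) ^ d i.castSucc‖
      ≤ C * ((β ^ D - 1) / (β - 1)) := by
    refine aux_bound β C hβ1 hCpos.le _ D _ _ (fun x y hxy => ?_)
      (fun i => hd (Fin.castSucc_lt_last i)) (fun i => hcC _)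
    exact Fin.castSucc_injective t (hd.injective hxy)
  have hL : ε * β ^ D ≤ ‖(c (Fin.last t) - a (Fin.last s)) * (β:ℂ)^D‖ := by
    rw [norm_mul, norm_pow, Complex.norm_real, Real.norm_eq_abs, abs_of_nonneg hβ0]
    exact mul_le_mul_of_nonneg_right hεab (pow_nonneg hβ0 _)
  have hR : ‖(c (Fin.last t) - a (Fin.last s)) * (β:ℂ)^D‖
      ≤ 2 * C * ((β ^ D - 1) / (β - 1)) := by
    rw [heq]
    calc ‖_‖ ≤ _ + _ := norm_sub_le _ _
      _ ≤ 2 * C * ((β ^ D - 1) / (β - 1)) := by linarith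
  have h2 : 2 * C * ((β ^ D - 1) / (β - 1)) ≤ ε * (β ^ D - 1) := by
    have := mul_le_mul_of_nonneg_right hkey hX
    calc 2 * C * ((β ^ D - 1) / (β - 1)) ≤ ε * (β - 1) * ((β ^ D - 1) / (β - 1)) := this
      _ = ε * (β ^ D - 1) := by
          have hne : β - 1 ≠ 0 := by linarith
          rw [mul_assoc, mul_comm (β - 1), div_mul_cancel₀ _ hne]
  have hpos : (0:ℝ) < β ^ D := pow_pos (lt_trans zero_lt_one hβ1) D
  nlinarith
end

section
/- Let A ⊂ ℂ be finite, C = max_{a∈A}|a|, ε = min(min_{a≠b∈A}|a−b|, min_{0≠a∈A}|a|), β ≥ 2C/ε + 1. Then any value f(β), where f(x) = Σᵢ cᵢ x^{dᵢ} with cᵢ ∈ A nonzero and d₁ < ⋯ < d_t, uniquely determines the polynomial f: if two such polynomials with all nonzero coefficients in A agree at β, they are equal. -/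
open Polynomial

lemma sum_coeff_eq {t : ℕ} (c : Fin t → ℂ) (d : Fin t → ℕ) (hd : Function.Injective d) (i : Fin t) :
    (∑ j, Polynomial.C (c j) * Polynomial.X ^ (d j)).coeff (d i) = c i := by
  rw [Polynomial.finset_sum_coeff, Finset.sum_eq_single i]
  · simp
  · intro j _ hj
    simp only [Polynomial.coeff_C_mul, Polynomial.coeff_X_pow, mul_ite, mul_one, mul_zero,
      ite_eq_right_iff]
    intro hdj
    exact absurd (hd hdj) (Ne.symm hj)
  · simp

lemma sum_coeff_zero {t : ℕ} (c : Fin t → ℂ) (d : Fin t → ℕ) (n : ℕ) (hn : ∀ i, d i ≠ n) :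
    (∑ j, Polynomial.C (c j) * Polynomial.X ^ (d j)).coeff n = 0 := by
  rw [Polynomial.finset_sum_coeff]
  apply Finset.sum_eq_zero
  intro j _
  simp only [Polynomial.coeff_C_mul, Polynomial.coeff_X_pow, mul_ite, mul_one, mul_zero,
    ite_eq_right_iff]
  intro hdj
  exact absurd hdj.symm (hn j)

lemma key_estimate (ε Cb β : ℝ) (hε : 0 < ε) (hCb : Cb ≤ ε * (β - 1)) (hβ1 : 1 ≤ β)
    (p : Polynomial ℂ) (hp : p ≠ 0)
    (hlow : ∀ n, p.coeff n ≠ 0 → ε ≤ ‖p.coeff n‖)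
    (hhigh : ∀ n, ‖p.coeff n‖ ≤ Cb) :
    p.eval (β : ℂ) ≠ 0 := by
  intro h0
  set N := p.natDegree with hN
  have hβ0 : (0:ℝ) ≤ β := le_trans zero_le_one hβ1
  have hlead : p.coeff N ≠ 0 := by
    rw [hN, ← Polynomial.leadingCoeff]
    exact Polynomial.leadingCoeff_ne_zero.mpr hp
  have heval := Polynomial.eval_eq_sum_range' (by omega : p.natDegree < N + 1) (β:ℂ)
  rw [Finset.sum_range_succ] at heval
  set T : ℂ := ∑ i ∈ Finset.range N, p.coeff i * (β:ℂ) ^ i with hT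
  have habsβ : ∀ i : ℕ, ‖(β:ℂ) ^ i‖ = β ^ i := by
    intro i
    rw [norm_pow, Complex.norm_real, Real.norm_of_nonneg hβ0]
  have hTle : ‖T‖ ≤ ε * (β ^ N - 1) := by
    calc ‖T‖ ≤ ∑ i ∈ Finset.range N, ‖p.coeff i * (β:ℂ) ^ i‖ :=
          norm_sum_le _ _
      _ ≤ ∑ i ∈ Finset.range N, Cb * β ^ i := by
          apply Finset.sum_le_sum
          intro i _
          rw [norm_mul, habsβ]
          exact mul_le_mul_of_nonneg_right (hhigh i) (pow_nonneg hβ0 i)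
      _ = Cb * ∑ i ∈ Finset.range N, β ^ i := by rw [Finset.mul_sum]
      _ ≤ (ε * (β - 1)) * ∑ i ∈ Finset.range N, β ^ i := by
          apply mul_le_mul_of_nonneg_right hCb
          apply Finset.sum_nonneg
          intro i _
          exact pow_nonneg hβ0 i
      _ = ε * ((∑ i ∈ Finset.range N, β ^ i) * (β - 1)) := by ring
      _ = ε * (β ^ N - 1) := by rw [geom_sum_mul]
  have hLge : ε * β ^ N ≤ ‖p.coeff N * (β:ℂ) ^ N‖ := by
    rw [norm_mul, habsβ]
    exact mul_le_mul_of_nonneg_right (hlow N hlead) (pow_nonneg hβ0 N)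
  have hkey : ‖p.coeff N * (β:ℂ) ^ N‖ ≤ ‖T‖ := by
    have : p.coeff N * (β:ℂ) ^ N = p.eval (β:ℂ) - T := by
      rw [heval]; ring
    rw [this, h0, zero_sub, norm_neg]
  have : ε * β ^ N ≤ ε * (β ^ N - 1) := le_trans hLge (le_trans hkey hTle)
  nlinarith [hε]

theorem stmt_2 (A : Finset ℂ) (C ε₁ ε₂ ε : ℝ)
    (hC : IsGreatest ((fun a : ℂ => ‖a‖) '' (A : Set ℂ)) C)
    (hε₁ : IsLeast {x : ℝ | ∃ a ∈ A, ∃ b ∈ A, a ≠ b ∧ x = ‖a - b‖} ε₁)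
    (hε₂ : IsLeast {x : ℝ | ∃ a ∈ A, a ≠ 0 ∧ x = ‖a‖} ε₂)
    (hε : ε = min ε₁ ε₂)
    (β : ℝ) (hβ : β ≥ 2 * C / ε + 1)
    (t s : ℕ) (c : Fin t → ℂ) (a : Fin s → ℂ)
    (d : Fin t → ℕ) (k : Fin s → ℕ)
    (hcA : ∀ i, c i ∈ A) (haA : ∀ j, a j ∈ A)
    (hc0 : ∀ i, c i ≠ 0) (ha0 : ∀ j, a j ≠ 0)
    (hd : StrictMono d) (hk : StrictMono k)
    (hsum : ∑ i, c i * (β : ℂ) ^ d i = ∑ j, a j * (β : ℂ) ^ k j) :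
    ∃ h : t = s, ∀ i : Fin t, d i = k (Fin.cast h i) ∧ c i = a (Fin.cast h i) := by
  -- basic positivity facts
  obtain ⟨hε₁mem, hε₁lb⟩ := hε₁
  obtain ⟨hε₂mem, hε₂lb⟩ := hε₂
  obtain ⟨a₀, ha₀, b₀, hb₀, hab, hε₁eq⟩ := hε₁mem
  obtain ⟨a₁, ha₁, ha₁0, hε₂eq⟩ := hε₂mem
  have hε₁pos : 0 < ε₁ := by
    rw [hε₁eq]
    exact norm_pos_iff.mpr (sub_ne_zero.mpr hab)
  have hε₂pos : 0 < ε₂ := by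
    rw [hε₂eq]
    exact norm_pos_iff.mpr ha₁0
  have hεpos : 0 < ε := by rw [hε]; exact lt_min hε₁pos hε₂pos
  have hCub : ∀ x ∈ A, ‖x‖ ≤ C := by
    intro x hx
    exact hC.2 ⟨x, hx, rfl⟩
  have hC0 : 0 ≤ C := le_trans (norm_nonneg a₀) (hCub a₀ ha₀)
  have hβ1 : 1 ≤ β := by
    have : 0 ≤ 2 * C / ε := div_nonneg (by linarith) (le_of_lt hεpos)
    linarith
  have hCb : 2 * C ≤ ε * (β - 1) := by
    have h1 : 2 * C / ε ≤ β - 1 := by linarith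
    calc 2 * C = ε * (2 * C / ε) := by field_simp
      _ ≤ ε * (β - 1) := mul_le_mul_of_nonneg_left h1 (le_of_lt hεpos)
  have hεε₁ : ε ≤ ε₁ := by rw [hε]; exact min_le_left _ _
  have hεε₂ : ε ≤ ε₂ := by rw [hε]; exact min_le_right _ _
  -- lower bounds on elements of A
  have hlbA : ∀ x ∈ A, x ≠ 0 → ε ≤ ‖x‖ := by
    intro x hx hx0
    exact le_trans hεε₂ (hε₂lb ⟨x, hx, hx0, rfl⟩)
  have hlbAB : ∀ x ∈ A, ∀ y ∈ A, x ≠ y → ε ≤ ‖x - y‖ := by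
    intro x hx y hy hxy
    exact le_trans hεε₁ (hε₁lb ⟨x, hx, y, hy, hxy, rfl⟩)
  -- polynomials
  set f : Polynomial ℂ := ∑ i, Polynomial.C (c i) * Polynomial.X ^ (d i) with hf
  set g : Polynomial ℂ := ∑ j, Polynomial.C (a j) * Polynomial.X ^ (k j) with hg
  have hevalf : f.eval (β:ℂ) = ∑ i, c i * (β:ℂ) ^ d i := by
    rw [hf, Polynomial.eval_finset_sum]
    simp
  have hevalg : g.eval (β:ℂ) = ∑ j, a j * (β:ℂ) ^ k j := by
    rw [hg, Polynomial.eval_finset_sum]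
    simp
  -- coefficient characterization
  have hcoefff : ∀ n, f.coeff n = 0 ∨ (f.coeff n ∈ A ∧ f.coeff n ≠ 0) := by
    intro n
    by_cases hex : ∃ i, d i = n
    · obtain ⟨i, rfl⟩ := hex
      rw [hf, sum_coeff_eq c d hd.injective i]
      exact Or.inr ⟨hcA i, hc0 i⟩
    · push_neg at hex
      exact Or.inl (by rw [hf]; exact sum_coeff_zero c d n hex)
  have hcoeffg : ∀ n, g.coeff n = 0 ∨ (g.coeff n ∈ A ∧ g.coeff n ≠ 0) := by
    intro n
    by_cases hex : ∃ j, k j = n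
    · obtain ⟨j, rfl⟩ := hex
      rw [hg, sum_coeff_eq a k hk.injective j]
      exact Or.inr ⟨haA j, ha0 j⟩
    · push_neg at hex
      exact Or.inl (by rw [hg]; exact sum_coeff_zero a k n hex)
  -- f = g
  have hfg : f = g := by
    by_contra hne
    have hp : f - g ≠ 0 := sub_ne_zero.mpr hne
    have hlow : ∀ n, (f - g).coeff n ≠ 0 → ε ≤ ‖(f - g).coeff n‖ := by
      intro n hn
      rw [Polynomial.coeff_sub] at hn ⊢
      rcases hcoefff n with h1 | ⟨h1A, h10⟩
      · rcases hcoeffg n with h2 | ⟨h2A, h20⟩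
        · exact absurd (by rw [h1, h2, sub_zero]) hn
        · rw [h1, zero_sub, norm_neg]
          exact hlbA _ h2A h20
      · rcases hcoeffg n with h2 | ⟨h2A, h20⟩
        · rw [h2, sub_zero]
          exact hlbA _ h1A h10
        · have hne' : f.coeff n ≠ g.coeff n := fun h => hn (by rw [h, sub_self])
          exact hlbAB _ h1A _ h2A hne'
    have hhigh : ∀ n, ‖(f - g).coeff n‖ ≤ 2 * C := by
      intro n
      rw [Polynomial.coeff_sub]
      have h1 : ‖f.coeff n‖ ≤ C := by
        rcases hcoefff n with h1 | ⟨h1A, _⟩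
        · rw [h1]; simpa using hC0
        · exact hCub _ h1A
      have h2 : ‖g.coeff n‖ ≤ C := by
        rcases hcoeffg n with h2 | ⟨h2A, _⟩
        · rw [h2]; simpa using hC0
        · exact hCub _ h2A
      calc ‖f.coeff n - g.coeff n‖
          ≤ ‖f.coeff n‖ + ‖g.coeff n‖ := norm_sub_le _ _
        _ ≤ 2 * C := by linarith
    have := key_estimate ε (2 * C) β hεpos hCb hβ1 (f - g) hp hlow hhigh
    apply this
    rw [Polynomial.eval_sub, hevalf, hevalg, hsum, sub_self]
  -- supports
  have hsuppf : f.support = Finset.image d Finset.univ := by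
    ext n
    simp only [Polynomial.mem_support_iff, Finset.mem_image, Finset.mem_univ, true_and]
    constructor
    · intro hn
      by_contra hex
      push_neg at hex
      exact hn (by rw [hf]; exact sum_coeff_zero c d n hex)
    · rintro ⟨i, rfl⟩
      rw [hf, sum_coeff_eq c d hd.injective i]
      exact hc0 i
  have hsuppg : g.support = Finset.image k Finset.univ := by
    ext n
    simp only [Polynomial.mem_support_iff, Finset.mem_image, Finset.mem_univ, true_and]
    constructor
    · intro hn
      by_contra hex
      push_neg at hex
      exact hn (by rw [hg]; exact sum_coeff_zero a k n hex)
    · rintro ⟨j, rfl⟩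
      rw [hg, sum_coeff_eq a k hk.injective j]
      exact ha0 j
  have himg : Finset.image d Finset.univ = Finset.image k Finset.univ := by
    rw [← hsuppf, ← hsuppg, hfg]
  have hcardd : (Finset.image d Finset.univ).card = t := by
    rw [Finset.card_image_of_injective _ hd.injective, Finset.card_univ, Fintype.card_fin]
  have hcardk : (Finset.image k Finset.univ).card = s := by
    rw [Finset.card_image_of_injective _ hk.injective, Finset.card_univ, Fintype.card_fin]
  have hts : t = s := by rw [← hcardd, himg, hcardk]
  refine ⟨hts, fun i => ?_⟩
  have hdk : d = fun i => k (Fin.cast hts i) := by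
    have h1 : d = ⇑((Finset.image d Finset.univ).orderEmbOfFin hcardd) :=
      Finset.orderEmbOfFin_unique hcardd (fun x => Finset.mem_image_of_mem d (Finset.mem_univ x)) hd
    have h2 : (fun i => k (Fin.cast hts i)) = ⇑((Finset.image d Finset.univ).orderEmbOfFin hcardd) := by
      apply Finset.orderEmbOfFin_unique hcardd
      · intro x
        rw [himg]
        exact Finset.mem_image_of_mem k (Finset.mem_univ _)
      · exact hk.comp (fun x y hxy => by simpa using hxy)
    rw [h1, h2]
  have hdki : d i = k (Fin.cast hts i) := by rw [hdk]
  refine ⟨hdki, ?_⟩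
  have hcf : f.coeff (d i) = c i := by rw [hf]; exact sum_coeff_eq c d hd.injective i
  have hcg : g.coeff (k (Fin.cast hts i)) = a (Fin.cast hts i) := by
    rw [hg]; exact sum_coeff_eq a k hk.injective _
  rw [← hcf, hfg, hdki, hcg]
end

section
/- Let f(x) = c₁x^{d₁} + ⋯ + c_t x^{d_t} with d₁ < ⋯ < d_t natural numbers and coefficients cᵢ in a finite set A ⊂ ℂ with c_t ≠ 0. Let C = max_{a∈A}|a|, ε = min(min_{a≠b∈A}|a−b|, min_{0≠a∈A}|a|), and β ≥ 2C/ε + 1. Then for every natural number k: if k ≤ d_t then |f(β)/β^k| > ε/2, and if k > d_t then |f(β)/β^k| < ε/2. -/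
theorem stmt_3 (A : Finset ℂ) (C ε₁ ε₂ ε : ℝ)
    (hC : IsGreatest ((fun a => ‖a‖) '' (A : Set ℂ)) C)
    (hε₁ : IsLeast {x : ℝ | ∃ a ∈ A, ∃ b ∈ A, a ≠ b ∧ x = ‖a - b‖} ε₁)
    (hε₂ : IsLeast {x : ℝ | ∃ a ∈ A, a ≠ 0 ∧ x = ‖a‖} ε₂)
    (hε : ε = min ε₁ ε₂)
    (β : ℝ) (hβ : β ≥ 2 * C / ε + 1)
    (t : ℕ) (c : Fin (t + 1) → ℂ) (d : Fin (t + 1) → ℕ)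
    (hcA : ∀ i, c i ∈ A) (hd : StrictMono d)
    (hct : c (Fin.last t) ≠ 0) :
    ∀ k : ℕ,
      (k ≤ d (Fin.last t) →
        ‖(∑ i, c i * (β : ℂ) ^ d i) / (β : ℂ) ^ k‖ > ε / 2) ∧
      (k > d (Fin.last t) →
        ‖(∑ i, c i * (β : ℂ) ^ d i) / (β : ℂ) ^ k‖ < ε / 2) := by
  set D := d (Fin.last t) with hDdef
  -- positivity of ε
  have hε₁pos : 0 < ε₁ := by
    obtain ⟨a, _, b, _, hab, hx⟩ := hε₁.1
    rw [hx]
    exact norm_pos_iff.mpr (sub_ne_zero.mpr hab)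
  have hε₂pos : 0 < ε₂ := by
    obtain ⟨a, _, ha, hx⟩ := hε₂.1
    rw [hx]
    exact norm_pos_iff.mpr ha
  have hεpos : 0 < ε := by rw [hε]; exact lt_min hε₁pos hε₂pos
  -- coefficient bounds
  have habsC : ∀ i, ‖c i‖ ≤ C := fun i =>
    hC.2 ⟨c i, by exact_mod_cast hcA i, rfl⟩
  have hεct : ε ≤ ‖c (Fin.last t)‖ := by
    have h2 : ε₂ ≤ ‖c (Fin.last t)‖ :=
      hε₂.2 ⟨c (Fin.last t), by exact_mod_cast hcA _, hct, rfl⟩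
    rw [hε]; exact le_trans (min_le_right _ _) h2
  have hCpos : 0 < C :=
    lt_of_lt_of_le (lt_of_lt_of_le hεpos hεct) (habsC _)
  -- β facts
  have hβ1 : 1 < β := by
    have : 0 < 2 * C / ε := by positivity
    linarith
  have hβpos : 0 < β := by linarith
  have hkey : C ≤ (β - 1) * (ε / 2) := by
    have h1 : 2 * C / ε ≤ β - 1 := by linarith
    have h2 : 2 * C ≤ (β - 1) * ε := by
      rw [div_le_iff₀ hεpos] at h1; linarith
    linarith
  -- geometric sum bound
  have hCsum : ∀ n : ℕ, C * ∑ j ∈ Finset.range n, β ^ j ≤ ε / 2 * (β ^ n - 1) := by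
    intro n
    rw [geom_sum_eq (ne_of_gt hβ1), ← mul_div_assoc,
      div_le_iff₀ (by linarith : (0:ℝ) < β - 1)]
    have hpow : (1:ℝ) ≤ β ^ n := one_le_pow₀ (le_of_lt hβ1)
    nlinarith
  -- abs of real power
  have habspow : ∀ n : ℕ, ‖(β : ℂ) ^ n‖ = β ^ n := by
    intro n
    rw [norm_pow, Complex.norm_real, Real.norm_of_nonneg hβpos.le]
  -- sum over all indices bounded by geometric sum
  have hsum_all : ∑ i, β ^ d i ≤ ∑ j ∈ Finset.range (D + 1), β ^ j := by
    have hinj : ∀ x ∈ (Finset.univ : Finset (Fin (t+1))), ∀ y ∈ Finset.univ,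
        d x = d y → x = y := fun x _ y _ h => hd.injective h
    calc ∑ i, β ^ d i = ∑ j ∈ Finset.univ.image d, β ^ j :=
          (Finset.sum_image hinj).symm
      _ ≤ ∑ j ∈ Finset.range (D + 1), β ^ j := by
          apply Finset.sum_le_sum_of_subset_of_nonneg
          · intro j hj
            obtain ⟨i, _, rfl⟩ := Finset.mem_image.mp hj
            exact Finset.mem_range.mpr (Nat.lt_succ_of_le (hd.monotone (Fin.le_last i)))
          · intro j _ _; positivity
  -- sum over first t indices bounded by geometric sum
  have hsum_init : ∑ i : Fin t, β ^ d i.castSucc ≤ ∑ j ∈ Finset.range D, β ^ j := by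
    have hinj : ∀ x ∈ (Finset.univ : Finset (Fin t)), ∀ y ∈ Finset.univ,
        d x.castSucc = d y.castSucc → x = y := fun x _ y _ h =>
      Fin.castSucc_injective t (hd.injective h)
    calc ∑ i : Fin t, β ^ d i.castSucc
        = ∑ j ∈ Finset.univ.image (fun i : Fin t => d i.castSucc), β ^ j :=
          (Finset.sum_image hinj).symm
      _ ≤ ∑ j ∈ Finset.range D, β ^ j := by
          apply Finset.sum_le_sum_of_subset_of_nonneg
          · intro j hj
            obtain ⟨i, _, rfl⟩ := Finset.mem_image.mp hj
            exact Finset.mem_range.mpr (hd (Fin.castSucc_lt_last i))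
          · intro j _ _; positivity
  set S : ℂ := ∑ i, c i * (β : ℂ) ^ d i with hSdef
  -- upper bound on |S|
  have hupper : ‖S‖ ≤ ε / 2 * (β ^ (D + 1) - 1) := by
    have h1 : ‖S‖ ≤ ∑ i, ‖c i * (β : ℂ) ^ d i‖ :=
      norm_sum_le _ _
    have h2 : ∑ i, ‖c i * (β : ℂ) ^ d i‖ ≤ C * ∑ i, β ^ d i := by
      rw [Finset.mul_sum]
      apply Finset.sum_le_sum
      intro i _
      rw [norm_mul, habspow]
      exact mul_le_mul_of_nonneg_right (habsC i) (by positivity)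
    have h3 : C * ∑ i, β ^ d i ≤ C * ∑ j ∈ Finset.range (D + 1), β ^ j :=
      mul_le_mul_of_nonneg_left hsum_all (le_of_lt hCpos)
    exact le_trans h1 (le_trans h2 (le_trans h3 (hCsum (D + 1))))
  -- lower bound on |S|
  have hlower : ε / 2 * β ^ D < ‖S‖ := by
    set T : ℂ := ∑ i : Fin t, c i.castSucc * (β : ℂ) ^ d i.castSucc with hTdef
    have hsplit : S = T + c (Fin.last t) * (β : ℂ) ^ D := by
      rw [hSdef, Fin.sum_univ_castSucc]
    have hT : ‖T‖ ≤ ε / 2 * (β ^ D - 1) := by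
      have h1 : ‖T‖ ≤ ∑ i : Fin t, ‖c i.castSucc * (β : ℂ) ^ d i.castSucc‖ :=
        norm_sum_le _ _
      have h2 : ∑ i : Fin t, ‖c i.castSucc * (β : ℂ) ^ d i.castSucc‖
          ≤ C * ∑ i : Fin t, β ^ d i.castSucc := by
        rw [Finset.mul_sum]
        apply Finset.sum_le_sum
        intro i _
        rw [norm_mul, habspow]
        exact mul_le_mul_of_nonneg_right (habsC _) (by positivity)
      have h3 : C * ∑ i : Fin t, β ^ d i.castSucc ≤ C * ∑ j ∈ Finset.range D, β ^ j :=
        mul_le_mul_of_nonneg_left hsum_init (le_of_lt hCpos)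
      exact le_trans h1 (le_trans h2 (le_trans h3 (hCsum D)))
    have hlast : ε * β ^ D ≤ ‖c (Fin.last t) * (β : ℂ) ^ D‖ := by
      rw [norm_mul, habspow]
      exact mul_le_mul_of_nonneg_right hεct (by positivity)
    have htri : ‖c (Fin.last t) * (β : ℂ) ^ D‖ - ‖T‖
        ≤ ‖S‖ := by
      rw [hsplit]
      have h1 := norm_add_le (T + c (Fin.last t) * (β : ℂ) ^ D) (-T)
      have h2 : T + c (Fin.last t) * (β : ℂ) ^ D + -T = c (Fin.last t) * (β : ℂ) ^ D := by ring
      rw [h2, norm_neg] at h1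
      linarith
    have hpow1 : (0:ℝ) < β ^ D := by positivity
    nlinarith
  -- conclusion
  intro k
  have habsdiv : ∀ k : ℕ, ‖S / (β : ℂ) ^ k‖ = ‖S‖ / β ^ k := by
    intro k; rw [norm_div, habspow]
  constructor
  · intro hk
    rw [habsdiv]
    rw [gt_iff_lt, lt_div_iff₀ (by positivity : (0:ℝ) < β ^ k)]
    have hle : β ^ k ≤ β ^ D := pow_le_pow_right₀ (le_of_lt hβ1) hk
    nlinarith
  · intro hk
    rw [habsdiv]
    rw [div_lt_iff₀ (by positivity : (0:ℝ) < β ^ k)]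
    have hle : β ^ (D + 1) ≤ β ^ k := pow_le_pow_right₀ (le_of_lt hβ1) hk
    have hpow1 : (0:ℝ) < β ^ (D + 1) := by positivity
    nlinarith
end

section
/- Under the same hypotheses (f with leading degree d_t, coefficients in finite A ⊂ ℂ with nonzero leading coefficient, and β ≥ 2C/ε + 1), the leading degree satisfies d_t = ⌊log_β(2|f(β)|/ε)⌋. -/
theorem stmt_4 (A : Finset ℂ) (C ε₁ ε₂ ε : ℝ)
    (hC : IsGreatest ((fun a : ℂ => ‖a‖) '' (A : Set ℂ)) C)
    (hε₁ : IsLeast {x : ℝ | ∃ a ∈ A, ∃ b ∈ A, a ≠ b ∧ x = ‖a - b‖} ε₁)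
    (hε₂ : IsLeast {x : ℝ | ∃ a ∈ A, a ≠ 0 ∧ x = ‖a‖} ε₂)
    (hε : ε = min ε₁ ε₂)
    (β : ℝ) (hβ : β ≥ 2 * C / ε + 1)
    (t : ℕ) (c : Fin (t + 1) → ℂ) (d : Fin (t + 1) → ℕ)
    (hcA : ∀ i, c i ∈ A) (hd : StrictMono d)
    (hct : c (Fin.last t) ≠ 0) :
    (d (Fin.last t) : ℤ) =
      ⌊Real.logb β (2 * ‖∑ i, c i * (β : ℂ) ^ d i‖ / ε)⌋ := by
  obtain ⟨hCmem, hCub⟩ := hC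
  obtain ⟨⟨a1, ha1A, b1, hb1A, hab, hε₁v⟩, hε₁lb⟩ := hε₁
  obtain ⟨⟨a2, ha2A, ha2ne, hε₂v⟩, hε₂lb⟩ := hε₂
  have hε₁pos : 0 < ε₁ := by
    rw [hε₁v]; simpa using sub_ne_zero.mpr hab
  have hε₂pos : 0 < ε₂ := by
    rw [hε₂v]; simpa using ha2ne
  have hεpos : 0 < ε := by rw [hε]; exact lt_min hε₁pos hε₂pos
  have hε₂C : ε₂ ≤ C := by
    rw [hε₂v]; exact hCub ⟨a2, ha2A, rfl⟩
  have hεC : ε ≤ C := (hε ▸ min_le_right _ _).trans hε₂C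
  have hCpos : 0 < C := lt_of_lt_of_le hεpos hεC
  have hβ1 : 1 < β := by
    have : 0 < 2 * C / ε := by positivity
    linarith
  have hβ0 : (0:ℝ) < β := by linarith
  have hCβ : C ≤ ε / 2 * (β - 1) := by
    have h1 : 2 * C / ε ≤ β - 1 := by linarith
    have := mul_le_mul_of_nonneg_left h1 (le_of_lt (half_pos hεpos))
    calc C = ε / 2 * (2 * C / ε) := by field_simp
    _ ≤ ε / 2 * (β - 1) := this
  have hcC : ∀ i, ‖c i‖ ≤ C := fun i => hCub ⟨c i, hcA i, rfl⟩
  have hεct : ε ≤ ‖c (Fin.last t)‖ :=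
    ((hε ▸ min_le_right _ _)).trans (hε₂lb ⟨_, hcA _, hct, rfl⟩)
  set D := d (Fin.last t) with hD
  have habsβ : ‖(β : ℂ)‖ = β := by
    rw [Complex.norm_real, Real.norm_eq_abs, abs_of_pos hβ0]
  set R : ℂ := ∑ i : Fin t, c i.castSucc * (β : ℂ) ^ d i.castSucc with hR
  have hrest : ‖R‖ ≤ ε / 2 * (β ^ D - 1) := by
    calc ‖R‖ ≤ ∑ i : Fin t, ‖c i.castSucc * (β : ℂ) ^ d i.castSucc‖ :=
          norm_sum_le _ _
    _ ≤ ∑ i : Fin t, C * β ^ d i.castSucc := by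
          refine Finset.sum_le_sum fun i _ => ?_
          rw [norm_mul, norm_pow, habsβ]
          exact mul_le_mul_of_nonneg_right (hcC _) (by positivity)
    _ = C * ∑ i : Fin t, β ^ d i.castSucc := by rw [Finset.mul_sum]
    _ ≤ C * ∑ j ∈ Finset.range D, β ^ j := by
          refine mul_le_mul_of_nonneg_left ?_ hCpos.le
          have hinj : Function.Injective (fun i : Fin t => d i.castSucc) :=
            fun i j h => Fin.castSucc_injective t (hd.injective h)
          rw [show (∑ i : Fin t, β ^ d i.castSucc)
              = ∑ j ∈ Finset.univ.image (fun i : Fin t => d i.castSucc), β ^ j from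
            (Finset.sum_image (fun i _ j _ h => hinj h)).symm]
          refine Finset.sum_le_sum_of_subset_of_nonneg ?_ (fun j _ _ => by positivity)
          intro j hj
          simp only [Finset.mem_image, Finset.mem_univ, true_and] at hj
          obtain ⟨i, rfl⟩ := hj
          rw [Finset.mem_range]
          exact hd (Fin.castSucc_lt_last i)
    _ ≤ ε / 2 * (β - 1) * ∑ j ∈ Finset.range D, β ^ j := by
          refine mul_le_mul_of_nonneg_right hCβ ?_
          exact Finset.sum_nonneg fun j _ => by positivity
    _ = ε / 2 * (β ^ D - 1) := by
          have := geom_sum_mul β D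
          nlinarith [this]
  have hsplit : (∑ i : Fin (t+1), c i * (β : ℂ) ^ d i)
      = R + c (Fin.last t) * (β : ℂ) ^ D := by
    rw [hR, Fin.sum_univ_castSucc]
  set S := ‖∑ i, c i * (β : ℂ) ^ d i‖ with hS
  have habslast : ‖c (Fin.last t) * (β : ℂ) ^ D‖
      = ‖c (Fin.last t)‖ * β ^ D := by
    rw [norm_mul, norm_pow, habsβ]
  have hβD1 : (1:ℝ) ≤ β ^ D := one_le_pow₀ hβ1.le
  have hβDpos : (0:ℝ) < β ^ D := by positivity
  have htri1 : ‖c (Fin.last t)‖ * β ^ D ≤ S + ‖R‖ := by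
    have h : c (Fin.last t) * (β : ℂ) ^ D = (R + c (Fin.last t) * (β : ℂ) ^ D) - R := by ring
    rw [← habslast, h]
    calc ‖(R + c (Fin.last t) * (β : ℂ) ^ D) - R‖
        ≤ ‖R + c (Fin.last t) * (β : ℂ) ^ D‖ + ‖R‖ := by
          simpa using norm_add_le (R + c (Fin.last t) * (β : ℂ) ^ D) (-R)
    _ = S + ‖R‖ := by rw [hS, hsplit]
  have htri2 : S ≤ ‖R‖ + ‖c (Fin.last t)‖ * β ^ D := by
    rw [hS, hsplit, ← habslast]
    exact norm_add_le _ _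
  have hSlow : ε / 2 * β ^ D ≤ S := by
    have := mul_le_mul_of_nonneg_right hεct hβDpos.le
    nlinarith
  have hShigh : S < ε / 2 * β ^ (D + 1) := by
    have h2 := mul_le_mul_of_nonneg_right (hcC (Fin.last t)) hβDpos.le
    have h3 : C * β ^ D ≤ ε / 2 * (β - 1) * β ^ D :=
      mul_le_mul_of_nonneg_right hCβ hβDpos.le
    have h4 : β ^ (D + 1) = β ^ D * β := pow_succ β D
    nlinarith
  have hSpos : 0 < S := by nlinarith
  have hx : 0 < 2 * S / ε := by positivity
  symm
  rw [Int.floor_eq_iff]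
  constructor
  · rw [Real.le_logb_iff_rpow_le hβ1 hx]
    have : β ^ ((D : ℤ) : ℝ) = β ^ D := by
      rw [show ((D:ℤ):ℝ) = ((D:ℕ):ℝ) by push_cast; ring, Real.rpow_natCast]
    rw [this, le_div_iff₀ hεpos]
    calc β ^ D * ε = 2 * (ε / 2 * β ^ D) := by ring
    _ ≤ 2 * S := by linarith
  · rw [Real.logb_lt_iff_lt_rpow hβ1 hx]
    have : β ^ (((D : ℤ) : ℝ) + 1) = β ^ (D + 1) := by
      rw [show ((D:ℤ):ℝ) + 1 = ((D+1:ℕ):ℝ) by push_cast; ring, Real.rpow_natCast]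
    rw [this, div_lt_iff₀ hεpos]
    calc 2 * S < 2 * (ε / 2 * β ^ (D + 1)) := by linarith
    _ = β ^ (D + 1) * ε := by ring
end

section
/- Let r₁ < r₂ be rationals with r₁ > 0, neither an integer, such that the open interval (r₁, r₂) contains no integer. Write r₁ = w + ε₁ and r₂ = w + ε₂ with w = ⌊r₁⌋ and 0 < ε₁ < ε₂ < 1. Then a positive integer d is the smallest positive integer such that (d·r₁, d·r₂) contains an integer if and only if d is the smallest positive integer such that (d·ε₁, d·ε₂) contains an integer; moreover, if d₁ is the smallest positive integer such that (d₁/ε₂, d₁/ε₁) contains an integer, then the smallest such d equals ⌈d₁/ε₂⌉ if d₁/ε₂ ∉ ℤ and d₁/ε₂ + 1 if d₁/ε₂ ∈ ℤ. -/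
theorem stmt_6 (r₁ r₂ : ℚ) (h0 : 0 < r₁) (h12 : r₁ < r₂)
    (hn1 : ¬ ∃ z : ℤ, (z : ℚ) = r₁) (hn2 : ¬ ∃ z : ℤ, (z : ℚ) = r₂)
    (hnoint : ¬ ∃ z : ℤ, r₁ < (z : ℚ) ∧ (z : ℚ) < r₂)
    (w : ℤ) (ε₁ ε₂ : ℚ) (hw : w = ⌊r₁⌋) (he1 : ε₁ = r₁ - w) (he2 : ε₂ = r₂ - w) :
    (∀ d : ℕ,
        IsLeast {d : ℕ | 0 < d ∧ ∃ z : ℤ, (d : ℚ) * r₁ < z ∧ (z : ℚ) < d * r₂} d ↔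
        IsLeast {d : ℕ | 0 < d ∧ ∃ z : ℤ, (d : ℚ) * ε₁ < z ∧ (z : ℚ) < d * ε₂} d) ∧
    (∀ d₁ d : ℕ,
      IsLeast {m : ℕ | 0 < m ∧ ∃ z : ℤ, (m : ℚ) / ε₂ < z ∧ (z : ℚ) < m / ε₁} d₁ →
      IsLeast {m : ℕ | 0 < m ∧ ∃ z : ℤ, (m : ℚ) * r₁ < z ∧ (z : ℚ) < m * r₂} d →
      ((¬ ∃ z : ℤ, (z : ℚ) = (d₁ : ℚ) / ε₂) → (d : ℚ) = ⌈(d₁ : ℚ) / ε₂⌉) ∧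
      ((∃ z : ℤ, (z : ℚ) = (d₁ : ℚ) / ε₂) → (d : ℚ) = (d₁ : ℚ) / ε₂ + 1)) := by
  have hfl : (w : ℚ) ≤ r₁ := by rw [hw]; exact Int.floor_le r₁
  have hε1 : 0 < ε₁ := by
    rcases lt_or_eq_of_le hfl with h | h
    · rw [he1]; linarith
    · exact absurd ⟨w, h⟩ hn1
  have hε12 : ε₁ < ε₂ := by rw [he1, he2]; linarith
  have hε2pos : 0 < ε₂ := lt_trans hε1 hε12
  have hr1 : r₁ = w + ε₁ := by rw [he1]; ring
  have hr2 : r₂ = w + ε₂ := by rw [he2]; ring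
  have hSeq : {d : ℕ | 0 < d ∧ ∃ z : ℤ, (d : ℚ) * r₁ < z ∧ (z : ℚ) < d * r₂}
            = {d : ℕ | 0 < d ∧ ∃ z : ℤ, (d : ℚ) * ε₁ < z ∧ (z : ℚ) < d * ε₂} := by
    ext m
    constructor
    · rintro ⟨hm, z, h1, h2⟩
      refine ⟨hm, z - m * w, ?_, ?_⟩
      · rw [hr1] at h1; push_cast
        have := mul_add (m : ℚ) (w : ℚ) ε₁
        linarith
      · rw [hr2] at h2; push_cast
        have := mul_add (m : ℚ) (w : ℚ) ε₂
        linarith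
    · rintro ⟨hm, z, h1, h2⟩
      refine ⟨hm, z + m * w, ?_, ?_⟩
      · rw [hr1]; push_cast
        have := mul_add (m : ℚ) (w : ℚ) ε₁
        linarith
      · rw [hr2]; push_cast
        have := mul_add (m : ℚ) (w : ℚ) ε₂
        linarith
  refine ⟨fun d => by rw [hSeq], ?_⟩
  intro d₁ d hd₁ hd
  rw [hSeq] at hd
  set q : ℚ := (d₁ : ℚ) / ε₂ with hq
  have hd₁pos : 0 < d₁ := hd₁.1.1
  have hd₁posQ : (0 : ℚ) < d₁ := by exact_mod_cast hd₁pos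
  have hqpos : 0 < q := by positivity
  obtain ⟨z₀, hz₀1, hz₀2⟩ := hd₁.1.2
  set M : ℤ := ⌊q⌋ + 1 with hM
  have hMle : M ≤ z₀ := by
    have : ⌊q⌋ < z₀ := Int.floor_lt.mpr hz₀1
    omega
  have hMgt : q < (M : ℚ) := by exact_mod_cast Int.lt_floor_add_one q
  have hMpos : 0 < M := by
    have : 0 ≤ ⌊q⌋ := Int.floor_nonneg.mpr hqpos.le
    omega
  have hMc : ((M.toNat : ℕ) : ℚ) = (M : ℚ) := by exact_mod_cast Int.toNat_of_nonneg hMpos.le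
  have hMleQ : (M : ℚ) ≤ (z₀ : ℚ) := by exact_mod_cast hMle
  have hLmem : M.toNat ∈ {m : ℕ | 0 < m ∧ ∃ z : ℤ, (m : ℚ) * ε₁ < z ∧ (z : ℚ) < m * ε₂} := by
    refine ⟨by omega, (d₁ : ℤ), ?_, ?_⟩
    · rw [hMc]
      have h1 : (z₀ : ℚ) * ε₁ < d₁ := (lt_div_iff₀ hε1).mp hz₀2
      have h2 : (M : ℚ) * ε₁ ≤ (z₀ : ℚ) * ε₁ := mul_le_mul_of_nonneg_right hMleQ hε1.le
      push_cast
      linarith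
    · rw [hMc]
      have : (d₁ : ℚ) < M * ε₂ := (div_lt_iff₀ hε2pos).mp hMgt
      push_cast
      linarith
  have hLlb : ∀ m ∈ {m : ℕ | 0 < m ∧ ∃ z : ℤ, (m : ℚ) * ε₁ < z ∧ (z : ℚ) < m * ε₂},
      M.toNat ≤ m := by
    rintro m ⟨hm, z, h1, h2⟩
    have hmQ : (0 : ℚ) < m := by exact_mod_cast hm
    have hzpos : 0 < z := by
      have : (0 : ℚ) < (z : ℚ) := lt_trans (by positivity) h1
      exact_mod_cast this
    have hzc : ((z.toNat : ℕ) : ℚ) = (z : ℚ) := by exact_mod_cast Int.toNat_of_nonneg hzpos.le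
    have hn : z.toNat ∈ {m : ℕ | 0 < m ∧ ∃ z : ℤ, (m : ℚ) / ε₂ < z ∧ (z : ℚ) < m / ε₁} := by
      refine ⟨by omega, (m : ℤ), ?_, ?_⟩
      · rw [hzc]; push_cast
        exact (div_lt_iff₀ hε2pos).mpr h2
      · rw [hzc]; push_cast
        exact (lt_div_iff₀ hε1).mpr h1
    have hle : d₁ ≤ z.toNat := hd₁.2 hn
    have hleQ : (d₁ : ℚ) ≤ (z : ℚ) := by
      rw [← hzc]; exact_mod_cast hle
    have hqlt : q < (m : ℚ) := by
      rw [hq, div_lt_iff₀ hε2pos]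
      linarith
    have : ⌊q⌋ < (m : ℤ) := Int.floor_lt.mpr (by exact_mod_cast hqlt)
    omega
  have hdeq : d = M.toNat := hd.unique ⟨hLmem, hLlb⟩
  constructor
  · intro hni
    have hflq : (⌊q⌋ : ℚ) < q := by
      rcases lt_or_eq_of_le (Int.floor_le q) with h | h
      · exact h
      · exact absurd ⟨⌊q⌋, h⟩ hni
    have hc : ⌈q⌉ = M := by
      have h1 : ⌈q⌉ ≤ M := Int.ceil_le_floor_add_one q
      have h2 : (⌊q⌋ : ℚ) < (⌈q⌉ : ℚ) := lt_of_lt_of_le hflq (Int.le_ceil q)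
      have h3 : ⌊q⌋ < ⌈q⌉ := by exact_mod_cast h2
      omega
    rw [hdeq, hMc, ← hc]
  · rintro ⟨z, hz⟩
    have hfz : ⌊q⌋ = z := by rw [← hz]; exact Int.floor_intCast z
    rw [hdeq, hMc, hM, hfz, ← hz]
    push_cast
    ring
end

section
/- Let f(x) = Σᵢ cᵢ x^{dᵢ} with nonzero coefficients cᵢ = bᵢ/aᵢ ∈ ℚ where 0 < aᵢ ≤ H and |cᵢ| ≤ C, d₁ < ⋯ < d_t, and let ε = 1/(H(H−1)) and β ≥ 2C/ε + 1. Write c_t = b/a in lowest terms with a > 0. Then a ≤ H, and b is the unique integer in the open interval (a·f(β)/β^{d_t} − aε/2, a·f(β)/β^{d_t} + aε/2); furthermore, if for some a₀ ∈ {1,…,H} the interval (a₀·f(β)/β^{d_t} − a₀ε/2, a₀·f(β)/β^{d_t} + a₀ε/2) contains an integer b₀, then b₀/a₀ = b/a. -/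
theorem stmt_9 (H : ℕ) (hH : 2 ≤ H) (C ε β : ℝ)
    (hε : ε = 1 / ((H : ℝ) * (H - 1))) (hβ : β ≥ 2 * C / ε + 1)
    (t : ℕ) (c : Fin (t + 1) → ℚ) (d : Fin (t + 1) → ℕ)
    (hc0 : ∀ i, c i ≠ 0) (hden : ∀ i, (c i).den ≤ H) (hbound : ∀ i, |(c i : ℝ)| ≤ C)
    (hd : StrictMono d) :
    -- write c_t = b / a in lowest terms: a = (c (Fin.last t)).den, b = (c (Fin.last t)).num
    ((c (Fin.last t)).den ≤ H) ∧
    (((c (Fin.last t)).den : ℝ) * (∑ i, (c i : ℝ) * β ^ d i) / β ^ d (Fin.last t)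
        - ((c (Fin.last t)).den : ℝ) * ε / 2 < ((c (Fin.last t)).num : ℝ) ∧
      ((c (Fin.last t)).num : ℝ) <
        ((c (Fin.last t)).den : ℝ) * (∑ i, (c i : ℝ) * β ^ d i) / β ^ d (Fin.last t)
          + ((c (Fin.last t)).den : ℝ) * ε / 2) ∧
    (∀ b' : ℤ,
      (((c (Fin.last t)).den : ℝ) * (∑ i, (c i : ℝ) * β ^ d i) / β ^ d (Fin.last t)
          - ((c (Fin.last t)).den : ℝ) * ε / 2 < (b' : ℝ) ∧
        (b' : ℝ) <
          ((c (Fin.last t)).den : ℝ) * (∑ i, (c i : ℝ) * β ^ d i) / β ^ d (Fin.last t)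
            + ((c (Fin.last t)).den : ℝ) * ε / 2) →
      b' = (c (Fin.last t)).num) ∧
    (∀ a₀ : ℕ, 1 ≤ a₀ → a₀ ≤ H → ∀ b₀ : ℤ,
      ((a₀ : ℝ) * (∑ i, (c i : ℝ) * β ^ d i) / β ^ d (Fin.last t)
          - (a₀ : ℝ) * ε / 2 < (b₀ : ℝ) ∧
        (b₀ : ℝ) <
          (a₀ : ℝ) * (∑ i, (c i : ℝ) * β ^ d i) / β ^ d (Fin.last t)
            + (a₀ : ℝ) * ε / 2) →
      (b₀ : ℚ) / (a₀ : ℚ) = c (Fin.last t)) := by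
  set L := Fin.last t with hL
  set S := ∑ i, (c i : ℝ) * β ^ d i with hS
  set D := d L with hD
  have hH2 : (2:ℝ) ≤ (H:ℝ) := by exact_mod_cast hH
  have hHH : (0:ℝ) < (H:ℝ) * ((H:ℝ) - 1) := by nlinarith
  have hεpos : 0 < ε := by rw [hε]; positivity
  have hcL : ((c L : ℝ)) ≠ 0 := by exact_mod_cast hc0 L
  have hCpos : 0 < C := lt_of_lt_of_le (abs_pos.mpr hcL) (hbound L)
  have hβ1 : 1 < β := by
    have : 0 < 2 * C / ε := by positivity
    linarith
  have hβpos : (0:ℝ) < β := by linarith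
  have h2C : 2 * C ≤ (β - 1) * ε := by
    have := (div_le_iff₀ hεpos).mp (by linarith : 2 * C / ε ≤ β - 1)
    linarith
  have hpow : (0:ℝ) < β ^ D := pow_pos hβpos _
  -- split off the leading term
  have hsplit : S = (c L : ℝ) * β ^ D + ∑ i ∈ Finset.univ.erase L, (c i : ℝ) * β ^ d i := by
    rw [hS, ← Finset.add_sum_erase _ _ (Finset.mem_univ L)]
  -- tail bound
  have himg : ∑ i ∈ Finset.univ.erase L, β ^ d i ≤ ∑ k ∈ Finset.range D, β ^ k := by
    rw [← Finset.sum_image (g := d) (f := fun k => β ^ k)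
      (fun i _ j _ h => hd.injective h)]
    apply Finset.sum_le_sum_of_subset_of_nonneg
    · intro k hk
      simp only [Finset.mem_image, Finset.mem_erase, Finset.mem_univ] at hk
      obtain ⟨i, ⟨hiL, -⟩, rfl⟩ := hk
      exact Finset.mem_range.mpr (hd (lt_of_le_of_ne (Fin.le_last i) hiL))
    · intro k _ _
      positivity
  have hgeo : ∑ k ∈ Finset.range D, β ^ k = (β ^ D - 1) / (β - 1) :=
    geom_sum_eq (by linarith) D
  have htail : |∑ i ∈ Finset.univ.erase L, (c i : ℝ) * β ^ d i| < ε / 2 * β ^ D := by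
    calc |∑ i ∈ Finset.univ.erase L, (c i : ℝ) * β ^ d i|
        ≤ ∑ i ∈ Finset.univ.erase L, |(c i : ℝ) * β ^ d i| :=
          Finset.abs_sum_le_sum_abs _ _
      _ ≤ ∑ i ∈ Finset.univ.erase L, C * β ^ d i := by
          apply Finset.sum_le_sum
          intro i _
          rw [abs_mul, abs_of_pos (pow_pos hβpos _)]
          exact mul_le_mul_of_nonneg_right (hbound i) (le_of_lt (pow_pos hβpos _))
      _ = C * ∑ i ∈ Finset.univ.erase L, β ^ d i := (Finset.mul_sum _ _ _).symm
      _ ≤ C * ∑ k ∈ Finset.range D, β ^ k := by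
          exact mul_le_mul_of_nonneg_left himg (le_of_lt hCpos)
      _ = C * ((β ^ D - 1) / (β - 1)) := by rw [hgeo]
      _ < ε / 2 * β ^ D := by
          rw [mul_div_assoc', div_lt_iff₀ (by linarith : (0:ℝ) < β - 1)]
          nlinarith
  have hkey : |S / β ^ D - (c L : ℝ)| < ε / 2 := by
    have h1 : S / β ^ D - (c L : ℝ) =
        (∑ i ∈ Finset.univ.erase L, (c i : ℝ) * β ^ d i) / β ^ D := by
      rw [hsplit]; field_simp; ring
    rw [h1, abs_div, abs_of_pos hpow, div_lt_iff₀ hpow]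
    exact htail
  have hkey' := abs_lt.mp hkey
  -- notation for a, b
  set a : ℕ := (c L).den with ha
  set b : ℤ := (c L).num with hb
  have hapos : 0 < a := (c L).pos
  have hA
    : (0:ℝ) < (a:ℝ) := by exact_mod_cast hapos
  have haH : (a:ℝ) ≤ (H:ℝ) := by exact_mod_cast hden L
  have hbq : (b:ℝ) = (a:ℝ) * (c L : ℝ) := by
    have hq : ((c L).den : ℚ) ≠ 0 := by
      exact_mod_cast (c L).den_nz
    have h := Rat.num_div_den (c L)
    rw [div_eq_iff hq] at h
    have h2 : (((c L).num : ℚ) : ℝ) = ((c L * (c L).den : ℚ) : ℝ) := by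
      exact_mod_cast congrArg (fun q : ℚ => (q : ℝ)) h
    push_cast at h2
    rw [hb, ha]
    linarith only [h2]
  have hHε : (H:ℝ) * ε ≤ 1 := by
    rw [hε, mul_one_div, div_le_one hHH]
    nlinarith
  have hAε : (a:ℝ) * ε ≤ 1 :=
    le_trans (mul_le_mul_of_nonneg_right haH (le_of_lt hεpos)) hHε
  have k1 := mul_lt_mul_of_pos_left hkey'.1 hA
  have k2 := mul_lt_mul_of_pos_left hkey'.2 hA
  have hlow : (a:ℝ) * S / β ^ D - (a:ℝ) * ε / 2 < (b:ℝ) := by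
    rw [hbq]; ring_nf at k2 ⊢; linarith only [k2]
  have hhigh : (b:ℝ) < (a:ℝ) * S / β ^ D + (a:ℝ) * ε / 2 := by
    rw [hbq]; ring_nf at k1 ⊢; linarith only [k1]
  refine ⟨hden L, ⟨hlow, hhigh⟩, ?_, ?_⟩
  · rintro b' ⟨hb1, hb2⟩
    have h1 : ((b' - b : ℤ) : ℝ) < 1 := by push_cast; linarith only [hb2, hlow, hAε]
    have h2 : (-1 : ℝ) < ((b' - b : ℤ) : ℝ) := by push_cast; linarith only [hb1, hhigh, hAε]
    have h0 : b' - b = 0 := by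
      apply Int.abs_lt_one_iff.mp
      have : |((b' - b : ℤ) : ℝ)| < 1 := abs_lt.mpr ⟨h2, h1⟩
      exact_mod_cast this
    rw [hb] at h0
    omega
  · rintro a₀ ha₀1 ha₀H b₀ ⟨hb1, hb2⟩
    have hA0 : (0:ℝ) < (a₀:ℝ) := by exact_mod_cast ha₀1
    have k1' := mul_lt_mul_of_pos_left hkey'.1 hA0
    have k2' := mul_lt_mul_of_pos_left hkey'.2 hA0
    -- |b₀ - a₀ * c L| < a₀ * ε
    have hd1 : (b₀:ℝ) - (a₀:ℝ) * (c L : ℝ) < (a₀:ℝ) * ε := by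
      ring_nf at k2' hb2 ⊢; linarith only [hb2, k2']
    have hd2 : -((a₀:ℝ) * ε) < (b₀:ℝ) - (a₀:ℝ) * (c L : ℝ) := by
      ring_nf at k1' hb1 ⊢; linarith only [hb1, k1']
    by_cases hcase : a₀ = a
    · subst hcase
      have h1 : ((b₀ - b : ℤ) : ℝ) < 1 := by push_cast; linarith only [hd1, hbq, hAε]
      have h2 : (-1 : ℝ) < ((b₀ - b : ℤ) : ℝ) := by push_cast; linarith only [hd2, hbq, hAε]
      have hb0b : b₀ = b := by
        have h0 : b₀ - b = 0 := by
          apply Int.abs_lt_one_iff.mp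
          have : |((b₀ - b : ℤ) : ℝ)| < 1 := abs_lt.mpr ⟨h2, h1⟩
          exact_mod_cast this
        omega
      rw [hb0b]
      exact_mod_cast Rat.num_div_den (c L)
    · -- a₀ ≠ a : a₀ * a ≤ H * (H - 1)
      have hprod : a₀ * a ≤ H * (H - 1) := by
        have haH' := hden L
        rcases lt_or_gt_of_ne hcase with h | h
        · calc a₀ * a ≤ (H - 1) * H := Nat.mul_le_mul (by omega) haH'
            _ = H * (H - 1) := Nat.mul_comm _ _
        · exact Nat.mul_le_mul ha₀H (by omega)
      have hprodR : (a₀:ℝ) * (a:ℝ) ≤ (H:ℝ) * ((H:ℝ) - 1) := by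
        have : ((a₀ * a : ℕ) : ℝ) ≤ ((H * (H - 1) : ℕ) : ℝ) := by exact_mod_cast hprod
        push_cast [Nat.cast_sub (by omega : 1 ≤ H)] at this
        linarith
      have hprodε : (a₀:ℝ) * (a:ℝ) * ε ≤ 1 := by
        rw [hε, mul_one_div, div_le_one hHH]
        exact hprodR
      -- multiply |b₀ - a₀ c L| < a₀ ε by a
      have hm1 := mul_lt_mul_of_pos_left hd1 hA
      have hm2 := mul_lt_mul_of_pos_left hd2 hA
      have hbq' : (a₀:ℝ) * (b:ℝ) = (a₀:ℝ) * ((a:ℝ) * (c L : ℝ)) := by rw [hbq]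
      have hz1 : (((a:ℤ) * b₀ - (a₀:ℤ) * b : ℤ) : ℝ) < 1 := by
        push_cast
        ring_nf at hm1 hbq' hprodε ⊢; linarith only [hm1, hbq', hprodε]
      have hz2 : (-1 : ℝ) < (((a:ℤ) * b₀ - (a₀:ℤ) * b : ℤ) : ℝ) := by
        push_cast
        ring_nf at hm2 hbq' hprodε ⊢; linarith only [hm2, hbq', hprodε]
      have hzero : (a:ℤ) * b₀ = (a₀:ℤ) * b := by
        have h0 : (a:ℤ) * b₀ - (a₀:ℤ) * b = 0 := by
          apply Int.abs_lt_one_iff.mp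
          have : |(((a:ℤ) * b₀ - (a₀:ℤ) * b : ℤ) : ℝ)| < 1 := abs_lt.mpr ⟨hz2, hz1⟩
          exact_mod_cast this
        linarith only [h0]
      have haQ : ((a:ℚ)) ≠ 0 := by positivity
      have ha0Q : ((a₀:ℚ)) ≠ 0 := by positivity
      rw [← Rat.num_div_den (c L), div_eq_div_iff ha0Q (by exact_mod_cast haQ)]
      have : ((((a:ℤ) * b₀ : ℤ)) : ℚ) = (((a₀:ℤ) * b : ℤ) : ℚ) := by exact_mod_cast hzero
      push_cast at this ⊢
      linarith only [this]
end

section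
/- Let f(x) = (c₁/H₁)x^{d₁} + ⋯ + (c_t/H_t)x^{d_t} where cᵢ ∈ ℤ, Hᵢ ∈ ℤ₊, d₁ < ⋯ < d_t, and |cᵢ/Hᵢ| ≤ C. Let H_max = max Hᵢ. If β ≥ 2C·H_max + 1, then |f(β)·H_t/β^{d_t} − c_t| < 1/2, and hence c_t = ⌈f(β)·H_t/β^{d_t} − 1/2⌉. -/
theorem stmt_10 (t : ℕ) (c : Fin (t + 1) → ℤ) (Hc : Fin (t + 1) → ℕ)
    (d : Fin (t + 1) → ℕ) (hH : ∀ i, 0 < Hc i) (hd : StrictMono d)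
    (C : ℝ) (hbound : ∀ i, |(c i : ℝ) / (Hc i : ℝ)| ≤ C)
    (β : ℝ) (hβ : β ≥ 2 * C * ((Finset.univ.sup Hc : ℕ) : ℝ) + 1) :
    |(∑ i, (c i : ℝ) / (Hc i : ℝ) * β ^ d i) * (Hc (Fin.last t) : ℝ)
        / β ^ d (Fin.last t) - (c (Fin.last t) : ℝ)| < 1 / 2 ∧
    c (Fin.last t) =
      ⌈(∑ i, (c i : ℝ) / (Hc i : ℝ) * β ^ d i) * (Hc (Fin.last t) : ℝ)
        / β ^ d (Fin.last t) - 1 / 2⌉ := by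
  have hC0 : 0 ≤ C := le_trans (abs_nonneg _) (hbound (Fin.last t))
  set Hm : ℕ := Finset.univ.sup Hc with hHmdef
  have hHmL : Hc (Fin.last t) ≤ Hm := Finset.le_sup (Finset.mem_univ _)
  have hHm1 : 1 ≤ Hm := le_trans (hH _) hHmL
  have hHm1' : (1:ℝ) ≤ (Hm:ℝ) := by exact_mod_cast hHm1
  have hβ1 : (1:ℝ) ≤ β := by nlinarith
  have hβ0 : (0:ℝ) < β := by linarith
  have hβd : (0:ℝ) < β ^ d (Fin.last t) := by positivity
  have hHL : (0:ℝ) < (Hc (Fin.last t) : ℝ) := by exact_mod_cast hH _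
  set X := (∑ i, (c i : ℝ) / (Hc i : ℝ) * β ^ d i) * (Hc (Fin.last t) : ℝ)
      / β ^ d (Fin.last t) with hXdef
  have key : |X - (c (Fin.last t) : ℝ)| < 1 / 2 := by
    have hsplit : X - (c (Fin.last t) : ℝ) =
        ∑ i : Fin t, (c i.castSucc : ℝ) / (Hc i.castSucc : ℝ) * β ^ d i.castSucc
          * (Hc (Fin.last t) : ℝ) / β ^ d (Fin.last t) := by
      rw [hXdef, Fin.sum_univ_castSucc, ← Finset.sum_div, ← Finset.sum_mul]
      field_simp
      ring
    rw [hsplit]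
    by_cases hC : C = 0
    · have hc0 : ∀ i, (c i : ℝ) = 0 := by
        intro i
        have h1 := hbound i
        rw [hC] at h1
        have h2 : (c i : ℝ) / (Hc i : ℝ) = 0 := abs_eq_zero.mp (le_antisymm h1 (abs_nonneg _))
        have hHi : (Hc i : ℝ) ≠ 0 := by exact_mod_cast (hH i).ne'
        exact (div_eq_zero_iff.mp h2).resolve_right hHi
      simp [hc0]
    · have hCpos : 0 < C := lt_of_le_of_ne hC0 (Ne.symm hC)
      have hβgt1 : 1 < β := by nlinarith
      set r : ℝ := 1 / β with hrdef
      have hr0 : 0 < r := by positivity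
      have hr1 : r < 1 := by rw [hrdef, div_lt_one hβ0]; exact hβgt1
      -- d inequality
      have hstep : ∀ (k : ℕ) (i : Fin (t+1)) (h : i.val + k ≤ t),
          d i + k ≤ d ⟨i.val + k, Nat.lt_succ_of_le h⟩ := by
        intro k
        induction k with
        | zero => intro i h; simp
        | succ k ih =>
          intro i h
          have hk : i.val + k ≤ t := by omega
          have h1 := ih i hk
          have h2 : (⟨i.val + k, Nat.lt_succ_of_le hk⟩ : Fin (t+1))
              < ⟨i.val + (k+1), Nat.lt_succ_of_le h⟩ := by
            exact Fin.mk_lt_mk.mpr (by omega)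
          have h3 := hd h2
          omega
      have hdle : ∀ i : Fin t, d i.castSucc + (t - i.val) ≤ d (Fin.last t) := by
        intro i
        have hi : (i.castSucc : Fin (t+1)).val + (t - i.val) ≤ t := by
          simp only [Fin.coe_castSucc]; omega
        have := hstep (t - i.val) i.castSucc hi
        have heq : (⟨(i.castSucc : Fin (t+1)).val + (t - i.val), Nat.lt_succ_of_le hi⟩ : Fin (t+1))
            = Fin.last t := by
          apply Fin.ext
          simp only [Fin.coe_castSucc, Fin.val_last]
          omega
        rwa [heq] at this
      -- per-term bound
      have hterm : ∀ i : Fin t,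
          |(c i.castSucc : ℝ) / (Hc i.castSucc : ℝ) * β ^ d i.castSucc
            * (Hc (Fin.last t) : ℝ) / β ^ d (Fin.last t)| ≤ C * Hm * r ^ (t - i.val) := by
        intro i
        have hdiv : β ^ d i.castSucc / β ^ d (Fin.last t) ≤ r ^ (t - i.val) := by
          rw [hrdef, div_pow, one_pow]
          rw [div_le_div_iff₀ hβd (pow_pos hβ0 _), one_mul]
          calc β ^ d i.castSucc * β ^ (t - i.val) = β ^ (d i.castSucc + (t - i.val)) := by
                rw [pow_add]
            _ ≤ β ^ d (Fin.last t) := pow_le_pow_right₀ hβ1 (hdle i)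
        have hHLm : (Hc (Fin.last t) : ℝ) ≤ (Hm : ℝ) := by exact_mod_cast hHmL
        have heq : (c i.castSucc : ℝ) / (Hc i.castSucc : ℝ) * β ^ d i.castSucc
            * (Hc (Fin.last t) : ℝ) / β ^ d (Fin.last t)
            = ((c i.castSucc : ℝ) / (Hc i.castSucc : ℝ))
              * ((Hc (Fin.last t) : ℝ) * (β ^ d i.castSucc / β ^ d (Fin.last t))) := by
          ring
        rw [heq, abs_mul]
        have h2 : |(Hc (Fin.last t) : ℝ) * (β ^ d i.castSucc / β ^ d (Fin.last t))|
            = (Hc (Fin.last t) : ℝ) * (β ^ d i.castSucc / β ^ d (Fin.last t)) := by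
          apply abs_of_nonneg; positivity
        rw [h2]
        have h4 : (Hc (Fin.last t) : ℝ) * (β ^ d i.castSucc / β ^ d (Fin.last t))
            ≤ (Hm : ℝ) * r ^ (t - i.val) := by
          apply mul_le_mul hHLm hdiv (by positivity) (by positivity)
        have h5 := mul_le_mul (hbound i.castSucc) h4 (by positivity) hC0
        calc |(c i.castSucc : ℝ) / (Hc i.castSucc : ℝ)|
              * ((Hc (Fin.last t) : ℝ) * (β ^ d i.castSucc / β ^ d (Fin.last t)))
              ≤ C * ((Hm : ℝ) * r ^ (t - i.val)) := h5
          _ = C * Hm * r ^ (t - i.val) := by ring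
      -- sum up
      have hsum1 : |∑ i : Fin t, (c i.castSucc : ℝ) / (Hc i.castSucc : ℝ) * β ^ d i.castSucc
          * (Hc (Fin.last t) : ℝ) / β ^ d (Fin.last t)|
          ≤ ∑ i : Fin t, C * Hm * r ^ (t - i.val) :=
        le_trans (Finset.abs_sum_le_sum_abs _ _) (Finset.sum_le_sum fun i _ => hterm i)
      have hsum2 : ∑ i : Fin t, C * (Hm:ℝ) * r ^ (t - i.val)
          = C * Hm * ∑ j ∈ Finset.range t, r ^ (t - j) := by
        rw [← Finset.mul_sum, Fin.sum_univ_eq_sum_range (fun j => r ^ (t - j)) t]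
      have hrefl : ∑ j ∈ Finset.range t, r ^ (t - j) = ∑ j ∈ Finset.range t, r ^ (j + 1) := by
        rw [← Finset.sum_range_reflect]
        apply Finset.sum_congr rfl
        intro j hj
        rw [Finset.mem_range] at hj
        congr 1
        omega
      set G : ℝ := ∑ j ∈ Finset.range t, r ^ j with hGdef
      have hrG : ∑ j ∈ Finset.range t, r ^ (j + 1) = r * G := by
        rw [hGdef, Finset.mul_sum]
        apply Finset.sum_congr rfl
        intro j _
        rw [pow_succ]; ring
      have hG0 : 0 ≤ G := Finset.sum_nonneg fun j _ => by positivity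
      have hgeom : G * (r - 1) = r ^ t - 1 := geom_sum_mul r t
      have h1 : G * (1 - r) < 1 := by nlinarith [pow_pos hr0 t]
      have h2 : 2 * C * (Hm:ℝ) * r ≤ 1 - r := by
        have hβr : r * β = 1 := by rw [hrdef]; field_simp
        nlinarith
      have hfinal : C * (Hm:ℝ) * (r * G) < 1 / 2 := by
        have h3 : 2 * C * (Hm:ℝ) * r * G ≤ (1 - r) * G := by
          have := mul_le_mul_of_nonneg_right h2 hG0
          linarith
        nlinarith
      calc |∑ i : Fin t, (c i.castSucc : ℝ) / (Hc i.castSucc : ℝ) * β ^ d i.castSucc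
            * (Hc (Fin.last t) : ℝ) / β ^ d (Fin.last t)|
          ≤ ∑ i : Fin t, C * Hm * r ^ (t - i.val) := hsum1
        _ = C * Hm * ∑ j ∈ Finset.range t, r ^ (t - j) := hsum2
        _ = C * Hm * (r * G) := by rw [hrefl, hrG]
        _ < 1 / 2 := hfinal
  refine ⟨key, ?_⟩
  rw [abs_sub_lt_iff] at key
  symm
  rw [Int.ceil_eq_iff]
  constructor
  · linarith [key.2]
  · linarith [key.1]
end

section
/- Let p be a good prime for f ∈ ℚ[x₁,…,xₙ] (i.e., the substitution xᵢ ↦ x^{(D+1)^{i−1} mod p} induces an injection on the monomials of f), where f has monomials with exponent vectors in {0,…,D}ⁿ and distinct primes q₁ < ⋯ < qₙ are given. Then in the polynomial g(x) = f(q₁x, q₂x^{(D+1) mod p}, …, qₙx^{(D+1)^{n−1} mod p}), each term has the form (cᵢ·q₁^{e_{i,1}}⋯qₙ^{e_{i,n}})·x^{dᵢ} with distinct exponents dᵢ, and the exponent vector (e_{i,1},…,e_{i,n}) is recoverable from the coefficient ratio (coefficient of x^{dᵢ} in g)/cᵢ = q₁^{e_{i,1}}⋯qₙ^{e_{i,n}}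 by unique factorization. -/
theorem stmt_18 (n t D p : ℕ) (hp : p.Prime) (hD : 0 < D)
    (c : Fin t → ℚ) (hc : ∀ i, c i ≠ 0)
    (e : Fin t → Fin n → ℕ) (he : Function.Injective e) (heD : ∀ i j, e i j ≤ D)
    (q : Fin n → ℕ) (hq : ∀ j, (q j).Prime) (hqmono : StrictMono q)
    (d : Fin t → ℕ) (hd : d = fun i => ∑ j, e i j * ((D + 1) ^ (j : ℕ) % p))
    (hgood : Function.Injective d)
    (g : Polynomial ℚ)
    (hg : g = ∑ i, Polynomial.C (c i * ∏ j, (q j : ℚ) ^ e i j) * Polynomial.X ^ d i) :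
    (∀ i, g.coeff (d i) = c i * ∏ j, (q j : ℚ) ^ e i j) ∧
    (∀ i, g.coeff (d i) / c i = ∏ j, (q j : ℚ) ^ e i j) ∧
    (∀ i i' : Fin t, (∏ j, (q j : ℚ) ^ e i j) = (∏ j, (q j : ℚ) ^ e i' j) → e i = e i') := by
  have hcoeff : ∀ i, g.coeff (d i) = c i * ∏ j, (q j : ℚ) ^ e i j := by
    intro i
    subst hg
    rw [Polynomial.finset_sum_coeff]
    rw [Finset.sum_eq_single i]
    · rw [Polynomial.coeff_C_mul, Polynomial.coeff_X_pow, if_pos rfl, mul_one]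
    · intro b _ hb
      rw [Polynomial.coeff_C_mul, Polynomial.coeff_X_pow]
      rw [if_neg (fun h => hb (hgood h.symm)), mul_zero]
    · simp
  refine ⟨hcoeff, fun i => by rw [hcoeff i, mul_comm, mul_div_assoc, div_self (hc i), mul_one],
    fun i i' hii => ?_⟩
  have hnat : (∏ j, q j ^ e i j) = ∏ j, q j ^ e i' j := by
    have := hii
    push_cast at this
    exact_mod_cast this
  funext j
  have hf := congrArg Nat.factorization hnat
  have key : ∀ (i : Fin t), (∏ j, q j ^ e i j).factorization (q j) = e i j := by
    intro i
    rw [Nat.factorization_prod (fun j' _ => pow_ne_zero _ (hq j').pos.ne')]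
    rw [Finset.sum_apply']
    rw [Finset.sum_eq_single j]
    · simp [Nat.factorization_pow, (hq j).factorization]
    · intro b _ hb
      simp [Nat.factorization_pow, (hq b).factorization, Finsupp.single_apply,
        hqmono.injective.ne hb]
    · simp
  rw [← key i, ← key i', hnat]
end
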